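/- Fix k > 0, μ ≠ 0, ς > 0, σ > 0, ρ ∈ (−1,1), q ∈ (0,1), and regard the mean-reversion level m̄ as a variable. With σ₁ = ρσ, σ₂ = √(1−ρ²)σ, α₁ = k + qμσ₁/ς, α₂ = σ₁² + σ₂²/(1−q), α₄ = √(α₁² + q(1−q)α₂μ²/ς²) (all independent of m̄), α₃(m̄) = k·m̄, B = (α₄−α₁)/α₂, C(m̄) = α₃(m̄)·B/α₄, define λ(m̄) := −(1/2)α₂·C(m̄)² + α₃(m̄)·C(m̄) + (1/2)(σ₁²+σ₂²)·B. Then for every m̄ ≠ 0, λ is differentiable at m̄ with λ'(m̄) = 2k·C(m̄) − (α₂/α₃(m̄))·k·C(m̄)² (equivalently λ'(m̄) = k·α₃(m̄)·B·(α₄+α₁)/α₄²). -/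

import Mathlib

/-- Kim–Omberg model, sensitivity of the recurrent eigenvalue with respect to the
mean-reversion level `m̄`: with `λ(m̄) = -(1/2)α₂C(m̄)² + α₃(m̄)C(m̄) + (1/2)σ²B`,
for every `m̄ ≠ 0`, `λ'(m̄) = 2kC(m̄) - (α₂/α₃(m̄))kC(m̄)²`, which equals
`kα₃(m̄)B(α₄+α₁)/α₄²`. -/
theorem stmt17 (k μ ς σ ρ q : ℝ)
    (hk : 0 < k) (hμ : μ ≠ 0) (hς : 0 < ς) (hσ : 0 < σ)
    (hρ : ρ ∈ Set.Ioo (-1 : ℝ) 1) (hq : q ∈ Set.Ioo (0 : ℝ) 1)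
    (σ₁ σ₂ α₁ α₂ α₄ B : ℝ)
    (hσ₁ : σ₁ = ρ * σ) (hσ₂ : σ₂ = Real.sqrt (1 - ρ ^ 2) * σ)
    (hα₁ : α₁ = k + q * μ * σ₁ / ς) (hα₂ : α₂ = σ₁ ^ 2 + σ₂ ^ 2 / (1 - q))
    (hα₄ : α₄ = Real.sqrt (α₁ ^ 2 + q * (1 - q) * α₂ * μ ^ 2 / ς ^ 2))
    (hB : B = (α₄ - α₁) / α₂)
    (α₃ C lam : ℝ → ℝ)
    (hα₃ : ∀ m, α₃ m = k * m)
    (hC : ∀ m, C m = α₃ m * B / α₄)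
    (hlam : ∀ m, lam m = -(1 / 2) * α₂ * (C m) ^ 2 + α₃ m * C m
      + (1 / 2) * (σ₁ ^ 2 + σ₂ ^ 2) * B) :
    ∀ m : ℝ, m ≠ 0 →
      HasDerivAt lam (2 * k * C m - (α₂ / α₃ m) * k * (C m) ^ 2) m ∧
      2 * k * C m - (α₂ / α₃ m) * k * (C m) ^ 2 = k * α₃ m * B * (α₄ + α₁) / α₄ ^ 2 := by
  intro m hm
  have hρ2 : 0 < 1 - ρ ^ 2 := by
    rcases hρ with ⟨h1, h2⟩; nlinarith
  have hσ₂p : 0 < σ₂ := by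
    rw [hσ₂]; exact mul_pos (Real.sqrt_pos.mpr hρ2) hσ
  have hq1 : q < 1 := hq.2
  have hq0 : 0 < q := hq.1
  have hα₂p : 0 < α₂ := by
    rw [hα₂]
    have h1 : 0 < σ₂ ^ 2 / (1 - q) := div_pos (by positivity) (by linarith)
    nlinarith [sq_nonneg σ₁]
  have hα₄p : 0 < α₄ := by
    rw [hα₄]
    apply Real.sqrt_pos.mpr
    have hμ2 : 0 < μ ^ 2 := (sq_nonneg μ).lt_of_ne' (by simpa using pow_ne_zero 2 hμ)
    have h2 : 0 < q * (1 - q) * α₂ * μ ^ 2 / ς ^ 2 := by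
      apply div_pos
      · exact mul_pos (mul_pos (mul_pos hq0 (by linarith)) hα₂p) hμ2
      · positivity
    nlinarith [sq_nonneg α₁]
  have hα₄ne : α₄ ≠ 0 := ne_of_gt hα₄p
  have hα₂ne : α₂ ≠ 0 := ne_of_gt hα₂p
  have hBkey : α₂ * B = α₄ - α₁ := by rw [hB]; field_simp
  have hkne : k ≠ 0 := ne_of_gt hk
  constructor
  · have hlam' : lam = fun x => (-(1/2) * α₂ * (k * B / α₄) ^ 2 + k * (k * B / α₄)) * x ^ 2
        + (1/2) * (σ₁ ^ 2 + σ₂ ^ 2) * B := by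
      funext x; rw [hlam, hC, hα₃]; ring
    have hd : HasDerivAt (fun x : ℝ => (-(1/2) * α₂ * (k * B / α₄) ^ 2 + k * (k * B / α₄)) * x ^ 2
        + (1/2) * (σ₁ ^ 2 + σ₂ ^ 2) * B)
        (2 * ((-(1/2) * α₂ * (k * B / α₄) ^ 2 + k * (k * B / α₄))) * m) m := by
      have := ((hasDerivAt_pow 2 m).const_mul
        ((-(1/2) * α₂ * (k * B / α₄) ^ 2 + k * (k * B / α₄)))).add_const
        ((1/2) * (σ₁ ^ 2 + σ₂ ^ 2) * B)
      simpa using this.congr_deriv (by ring)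
    rw [hlam']
    convert hd using 1
    rw [hC, hα₃]
    field_simp
    ring
  · rw [hC, hα₃]
    field_simp
    linear_combination (-B) * hBkey
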